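/- Let U, V ⊆ ℝ² be open, let γ : V → U be a C¹ bijection with det(Dγ(s)) > 0 for all s ∈ V, let f : U → ℝ³ be C¹ with g_f(x) invertible for all x ∈ U, and let δf₁, δf₂ : U → ℝ³ be C¹. Fix a, λ, c ∈ ℝ. Define on U: g = g_f, δgᵢ = (Df)ᵀ(D δfᵢ) + (D δfᵢ)ᵀ(Df), n = n_f, and δnᵢ = −½ Tr(g⁻¹δgᵢ) n + (det g)^{−1/2} ( (δfᵢ)ᵤ × fᵥ + fᵤ × (δfᵢ)ᵥ ); define the corresponding quantities g̃, δg̃ᵢ, ñ, δñᵢ on V from f̃ = f∘γ and δf̃ᵢ = δfᵢ∘γ. If the function x ↦ (det g(x))^{1/2} ( a Tr(g⁻¹δg₁ g⁻¹δg₂) + (λ/2) Tr(g⁻¹δg₁) Tr(g⁻¹δg₂) + c δn₁·δn₂ )(x) is Lebesgue integrable on U, then ∫_V (det g̃)^{1/2} ( a Tr(g̃⁻¹δg̃₁ g̃⁻¹δg̃₂) + (λ/2) Tr(g̃⁻¹δg̃₁) Tr(g̃⁻¹δg̃₂) + c δñ₁·δñ₂ ) ds = ∫_U (det g)^{1/2}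 ( a Tr(g⁻¹δg₁ g⁻¹δg₂) + (λ/2) Tr(g⁻¹δg₁) Tr(g⁻¹δg₂) + c δn₁·δn₂ ) dx, i.e. the elastic metric is invariant under orientation-preserving reparameterizations. -/

import Mathlib

open Matrix MeasureTheory

noncomputable section

/-- Partial derivative of a map from ℝ² in direction `i` (image of `eᵢ` under the Fréchet derivative). -/
def pd (f : (Fin 2 → ℝ) → (Fin 3 → ℝ)) (x : Fin 2 → ℝ) (i : Fin 2) : Fin 3 → ℝ :=
  fderiv ℝ f x (Pi.single i 1)

/-- Jacobian matrix of a map ℝ² → ℝ². -/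
def Jmat (γ : (Fin 2 → ℝ) → (Fin 2 → ℝ)) (s : Fin 2 → ℝ) : Matrix (Fin 2) (Fin 2) ℝ :=
  Matrix.of fun i j => fderiv ℝ γ s (Pi.single j 1) i

/-- First fundamental form (Gram matrix of the partial derivatives) of a parameterized surface. -/
def gmat (f : (Fin 2 → ℝ) → (Fin 3 → ℝ)) (x : Fin 2 → ℝ) : Matrix (Fin 2) (Fin 2) ℝ :=
  Matrix.of fun i j => pd f x i ⬝ᵥ pd f x j

/-- Euclidean norm on ℝ³ (as `Fin 3 → ℝ`). -/
def enorm3 (v : Fin 3 → ℝ) : ℝ := Real.sqrt (v ⬝ᵥ v)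

/-- Unit normal vector of a parameterized surface at a point. -/
def unitNormal (f : (Fin 2 → ℝ) → (Fin 3 → ℝ)) (x : Fin 2 → ℝ) : Fin 3 → ℝ :=
  (enorm3 (pd f x 0 ⨯₃ pd f x 1))⁻¹ • (pd f x 0 ⨯₃ pd f x 1)

/-- Variation of the first fundamental form: δg = (Df)ᵀ(Dδf) + (Dδf)ᵀ(Df). -/
def dgmat (f δf : (Fin 2 → ℝ) → (Fin 3 → ℝ)) (x : Fin 2 → ℝ) : Matrix (Fin 2) (Fin 2) ℝ :=
  Matrix.of fun i j => pd f x i ⬝ᵥ pd δf x j + pd δf x i ⬝ᵥ pd f x j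

/-- Variation of the unit normal field:
`δn = −½ Tr(g⁻¹δg) n + (det g)^{−1/2} (δfᵤ × fᵥ + fᵤ × δfᵥ)`. -/
def dnvec (f δf : (Fin 2 → ℝ) → (Fin 3 → ℝ)) (x : Fin 2 → ℝ) : Fin 3 → ℝ :=
  (-(1/2) * ((gmat f x)⁻¹ * dgmat f δf x).trace) • unitNormal f x +
    (Real.sqrt (gmat f x).det)⁻¹ • (pd δf x 0 ⨯₃ pd f x 1 + pd f x 0 ⨯₃ pd δf x 1)

/-- The integrand of the elastic metric
`|g|^{1/2} ( a Tr(g⁻¹δg₁ g⁻¹δg₂) + (λ/2) Tr(g⁻¹δg₁) Tr(g⁻¹δg₂) + c δn₁·δn₂ )`. -/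
def elasticIntegrand (f δf₁ δf₂ : (Fin 2 → ℝ) → (Fin 3 → ℝ)) (a lam c : ℝ)
    (x : Fin 2 → ℝ) : ℝ :=
  Real.sqrt (gmat f x).det *
    (a * ((gmat f x)⁻¹ * dgmat f δf₁ x * ((gmat f x)⁻¹ * dgmat f δf₂ x)).trace +
      lam / 2 * ((gmat f x)⁻¹ * dgmat f δf₁ x).trace * ((gmat f x)⁻¹ * dgmat f δf₂ x).trace +
      c * (dnvec f δf₁ x ⬝ᵥ dnvec f δf₂ x))

lemma fderiv_eval (f : (Fin 2 → ℝ) → (Fin 3 → ℝ)) (x : Fin 2 → ℝ) (hf : DifferentiableAt ℝ f x)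
    (v : Fin 2 → ℝ) : fderiv ℝ f x v = v 0 • pd f x 0 + v 1 • pd f x 1 := by
  have hv : v = v 0 • (Pi.single 0 1 : Fin 2 → ℝ) + v 1 • (Pi.single 1 1 : Fin 2 → ℝ) := by
    funext k; fin_cases k <;> simp
  conv_lhs => rw [hv]
  rw [map_add, _root_.map_smul, _root_.map_smul]
  simp [pd]

lemma pd_comp (γ : (Fin 2 → ℝ) → (Fin 2 → ℝ)) (h : (Fin 2 → ℝ) → (Fin 3 → ℝ))
    (s : Fin 2 → ℝ) (hγ : DifferentiableAt ℝ γ s) (hh : DifferentiableAt ℝ h (γ s)) (i : Fin 2) :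
    pd (h ∘ γ) s i = Jmat γ s 0 i • pd h (γ s) 0 + Jmat γ s 1 i • pd h (γ s) 1 := by
  have := fderiv_comp s hh hγ
  rw [pd, this]
  simp only [ContinuousLinearMap.coe_comp', Function.comp_apply]
  rw [fderiv_eval h (γ s) hh]
  rfl

lemma gmat_comp (γ : (Fin 2 → ℝ) → (Fin 2 → ℝ)) (f : (Fin 2 → ℝ) → (Fin 3 → ℝ))
    (s : Fin 2 → ℝ) (hγ : DifferentiableAt ℝ γ s) (hf : DifferentiableAt ℝ f (γ s)) :
    gmat (f ∘ γ) s = (Jmat γ s)ᵀ * gmat f (γ s) * Jmat γ s := by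
  ext i j
  simp only [gmat, Matrix.of_apply, pd_comp γ f s hγ hf, Matrix.mul_apply, Fin.sum_univ_two,
    Matrix.transpose_apply, dotProduct, Fin.sum_univ_three, Pi.add_apply, Pi.smul_apply,
    smul_eq_mul]
  ring

lemma dgmat_comp (γ : (Fin 2 → ℝ) → (Fin 2 → ℝ)) (f δf : (Fin 2 → ℝ) → (Fin 3 → ℝ))
    (s : Fin 2 → ℝ) (hγ : DifferentiableAt ℝ γ s) (hf : DifferentiableAt ℝ f (γ s))
    (hδf : DifferentiableAt ℝ δf (γ s)) :
    dgmat (f ∘ γ) (δf ∘ γ) s = (Jmat γ s)ᵀ * dgmat f δf (γ s) * Jmat γ s := by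
  ext i j
  simp only [dgmat, Matrix.of_apply, pd_comp γ f s hγ hf, pd_comp γ δf s hγ hδf,
    Matrix.mul_apply, Fin.sum_univ_two, Matrix.transpose_apply, dotProduct, Fin.sum_univ_three,
    Pi.add_apply, Pi.smul_apply, smul_eq_mul]
  ring

lemma cross_combo (A : Matrix (Fin 2) (Fin 2) ℝ) (u v : Fin 2 → (Fin 3 → ℝ)) :
    (A 0 0 • u 0 + A 1 0 • u 1) ⨯₃ (A 0 1 • v 0 + A 1 1 • v 1)
      + (A 0 0 • v 0 + A 1 0 • v 1) ⨯₃ (A 0 1 • u 0 + A 1 1 • u 1)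
      = A.det • (u 0 ⨯₃ v 1 + v 0 ⨯₃ u 1) := by
  simp only [Matrix.det_fin_two, map_add, _root_.map_smul, LinearMap.add_apply, LinearMap.smul_apply,
    smul_add]
  rw [← cross_anticomm (u 0) (v 0), ← cross_anticomm (u 0) (v 1), ← cross_anticomm (u 1) (v 0),
    ← cross_anticomm (u 1) (v 1)]
  module

lemma cross_combo_self (A : Matrix (Fin 2) (Fin 2) ℝ) (u : Fin 2 → (Fin 3 → ℝ)) :
    (A 0 0 • u 0 + A 1 0 • u 1) ⨯₃ (A 0 1 • u 0 + A 1 1 • u 1) = A.det • (u 0 ⨯₃ u 1) := by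
  simp only [Matrix.det_fin_two, map_add, _root_.map_smul, LinearMap.add_apply, LinearMap.smul_apply,
    smul_add]
  rw [← cross_anticomm (u 0) (u 1), cross_self, cross_self]
  module

lemma conj_simp (J A B : Matrix (Fin 2) (Fin 2) ℝ) (hJ : IsUnit J.det) :
    (Jᵀ * A * J)⁻¹ * (Jᵀ * B * J) = J⁻¹ * (A⁻¹ * B) * J := by
  have hJT : IsUnit Jᵀ.det := by rwa [Matrix.det_transpose]
  rw [Matrix.mul_inv_rev, Matrix.mul_inv_rev]
  simp only [Matrix.mul_assoc]
  rw [← Matrix.mul_assoc (Jᵀ)⁻¹ Jᵀ (B * J), Matrix.nonsing_inv_mul _ hJT, Matrix.one_mul]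

lemma enorm3_smul (c : ℝ) (w : Fin 3 → ℝ) : enorm3 (c • w) = |c| * enorm3 w := by
  have : (c • w) ⬝ᵥ (c • w) = c ^ 2 * (w ⬝ᵥ w) := by
    rw [smul_dotProduct, dotProduct_smul, smul_eq_mul, smul_eq_mul]; ring
  rw [enorm3, enorm3, this, Real.sqrt_mul (sq_nonneg c), Real.sqrt_sq_eq_abs]

lemma unitNormal_comp (γ : (Fin 2 → ℝ) → (Fin 2 → ℝ)) (f : (Fin 2 → ℝ) → (Fin 3 → ℝ))
    (s : Fin 2 → ℝ) (hγ : DifferentiableAt ℝ γ s) (hf : DifferentiableAt ℝ f (γ s))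
    (hJ : 0 < (Jmat γ s).det) :
    unitNormal (f ∘ γ) s = unitNormal f (γ s) := by
  have hc : pd (f ∘ γ) s 0 ⨯₃ pd (f ∘ γ) s 1
      = (Jmat γ s).det • (pd f (γ s) 0 ⨯₃ pd f (γ s) 1) := by
    rw [pd_comp γ f s hγ hf, pd_comp γ f s hγ hf]
    exact cross_combo_self (Jmat γ s) (pd f (γ s))
  rw [unitNormal, hc, enorm3_smul, abs_of_pos hJ, unitNormal, smul_smul]
  congr 1
  rw [mul_inv, mul_comm ((Jmat γ s).det)⁻¹, mul_assoc, inv_mul_cancel₀ (ne_of_gt hJ), mul_one]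

lemma sqrt_det_comp (J g : Matrix (Fin 2) (Fin 2) ℝ) (hJ : 0 < J.det) :
    Real.sqrt (Jᵀ * g * J).det = J.det * Real.sqrt g.det := by
  have : (Jᵀ * g * J).det = J.det ^ 2 * g.det := by
    rw [Matrix.det_mul, Matrix.det_mul, Matrix.det_transpose]; ring
  rw [this, Real.sqrt_mul (sq_nonneg _), Real.sqrt_sq_eq_abs, abs_of_pos hJ]

lemma dnvec_comp (γ : (Fin 2 → ℝ) → (Fin 2 → ℝ)) (f δf : (Fin 2 → ℝ) → (Fin 3 → ℝ))
    (s : Fin 2 → ℝ) (hγ : DifferentiableAt ℝ γ s) (hf : DifferentiableAt ℝ f (γ s))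
    (hδf : DifferentiableAt ℝ δf (γ s)) (hJ : 0 < (Jmat γ s).det)
    (hg : IsUnit (gmat f (γ s))) :
    dnvec (f ∘ γ) (δf ∘ γ) s = dnvec f δf (γ s) := by
  set J := Jmat γ s with hJdef
  have hJu : IsUnit J.det := (isUnit_iff_ne_zero).mpr (ne_of_gt hJ)
  have htr : ((gmat (f ∘ γ) s)⁻¹ * dgmat (f ∘ γ) (δf ∘ γ) s).trace
      = ((gmat f (γ s))⁻¹ * dgmat f δf (γ s)).trace := by
    rw [gmat_comp γ f s hγ hf, dgmat_comp γ f δf s hγ hf hδf, conj_simp _ _ _ hJu,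
      Matrix.trace_mul_cycle]
    rw [← Matrix.mul_assoc, Matrix.mul_nonsing_inv _ hJu, Matrix.one_mul]
  have hcross : pd (δf ∘ γ) s 0 ⨯₃ pd (f ∘ γ) s 1 + pd (f ∘ γ) s 0 ⨯₃ pd (δf ∘ γ) s 1
      = J.det • (pd δf (γ s) 0 ⨯₃ pd f (γ s) 1 + pd f (γ s) 0 ⨯₃ pd δf (γ s) 1) := by
    rw [pd_comp γ f s hγ hf, pd_comp γ f s hγ hf, pd_comp γ δf s hγ hδf, pd_comp γ δf s hγ hδf]
    exact cross_combo J (pd δf (γ s)) (pd f (γ s))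
  rw [dnvec, dnvec, htr, unitNormal_comp γ f s hγ hf hJ, hcross,
    gmat_comp γ f s hγ hf, sqrt_det_comp _ _ hJ, smul_smul]
  congr 2
  rw [mul_inv, mul_comm (J.det)⁻¹, mul_assoc, inv_mul_cancel₀ (ne_of_gt hJ), mul_one]

lemma trace_conj (J M : Matrix (Fin 2) (Fin 2) ℝ) (hJu : IsUnit J.det) :
    (J⁻¹ * M * J).trace = M.trace := by
  rw [Matrix.trace_mul_cycle, Matrix.mul_nonsing_inv _ hJu, Matrix.one_mul]

lemma elastic_comp (γ : (Fin 2 → ℝ) → (Fin 2 → ℝ)) (f δf₁ δf₂ : (Fin 2 → ℝ) → (Fin 3 → ℝ))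
    (a lam c : ℝ) (s : Fin 2 → ℝ) (hγ : DifferentiableAt ℝ γ s)
    (hf : DifferentiableAt ℝ f (γ s)) (h1 : DifferentiableAt ℝ δf₁ (γ s))
    (h2 : DifferentiableAt ℝ δf₂ (γ s)) (hJ : 0 < (Jmat γ s).det)
    (hg : IsUnit (gmat f (γ s))) :
    elasticIntegrand (f ∘ γ) (δf₁ ∘ γ) (δf₂ ∘ γ) a lam c s
      = (Jmat γ s).det * elasticIntegrand f δf₁ δf₂ a lam c (γ s) := by
  set J := Jmat γ s with hJdef
  have hJu : IsUnit J.det := isUnit_iff_ne_zero.mpr (ne_of_gt hJ)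
  set g := gmat f (γ s)
  set M₁ := g⁻¹ * dgmat f δf₁ (γ s)
  set M₂ := g⁻¹ * dgmat f δf₂ (γ s)
  have e1 : (gmat (f ∘ γ) s)⁻¹ * dgmat (f ∘ γ) (δf₁ ∘ γ) s = J⁻¹ * M₁ * J := by
    rw [gmat_comp γ f s hγ hf, dgmat_comp γ f δf₁ s hγ hf h1, conj_simp _ _ _ hJu]
  have e2 : (gmat (f ∘ γ) s)⁻¹ * dgmat (f ∘ γ) (δf₂ ∘ γ) s = J⁻¹ * M₂ * J := by
    rw [gmat_comp γ f s hγ hf, dgmat_comp γ f δf₂ s hγ hf h2, conj_simp _ _ _ hJu]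
  have eprod : (J⁻¹ * M₁ * J) * (J⁻¹ * M₂ * J) = J⁻¹ * (M₁ * M₂) * J := by
    simp only [Matrix.mul_assoc]
    rw [← Matrix.mul_assoc J J⁻¹ (M₂ * J), Matrix.mul_nonsing_inv _ hJu, Matrix.one_mul]
  rw [elasticIntegrand, elasticIntegrand, e1, e2, eprod, trace_conj _ _ hJu,
    trace_conj _ _ hJu, trace_conj _ _ hJu,
    dnvec_comp γ f δf₁ s hγ hf h1 hJ hg, dnvec_comp γ f δf₂ s hγ hf h2 hJ hg,
    gmat_comp γ f s hγ hf, sqrt_det_comp _ _ hJ]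
  ring

lemma Jmat_eq_toMatrix (γ : (Fin 2 → ℝ) → (Fin 2 → ℝ)) (s : Fin 2 → ℝ) :
    Jmat γ s = LinearMap.toMatrix (Pi.basisFun ℝ (Fin 2)) (Pi.basisFun ℝ (Fin 2))
      (fderiv ℝ γ s : (Fin 2 → ℝ) →ₗ[ℝ] (Fin 2 → ℝ)) := by
  ext i j
  simp [Jmat, LinearMap.toMatrix_apply, Pi.basisFun_apply, Pi.basisFun_repr]

lemma Jmat_det_eq (γ : (Fin 2 → ℝ) → (Fin 2 → ℝ)) (s : Fin 2 → ℝ) :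
    (Jmat γ s).det = (fderiv ℝ γ s).det := by
  rw [Jmat_eq_toMatrix, LinearMap.det_toMatrix]

theorem stmt5 (U V : Set (Fin 2 → ℝ)) (hU : IsOpen U) (hV : IsOpen V)
    (γ : (Fin 2 → ℝ) → (Fin 2 → ℝ)) (f δf₁ δf₂ : (Fin 2 → ℝ) → (Fin 3 → ℝ))
    (a lam c : ℝ)
    (hγ : ContDiffOn ℝ 1 γ V) (hbij : Set.BijOn γ V U)
    (hdet : ∀ s ∈ V, 0 < (Jmat γ s).det)
    (hf : ContDiffOn ℝ 1 f U) (hg : ∀ x ∈ U, IsUnit (gmat f x))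
    (h1 : ContDiffOn ℝ 1 δf₁ U) (h2 : ContDiffOn ℝ 1 δf₂ U)
    (hint : IntegrableOn (elasticIntegrand f δf₁ δf₂ a lam c) U) :
    ∫ s in V, elasticIntegrand (f ∘ γ) (δf₁ ∘ γ) (δf₂ ∘ γ) a lam c s
      = ∫ x in U, elasticIntegrand f δf₁ δf₂ a lam c x := by
  have hγd : ∀ s ∈ V, DifferentiableAt ℝ γ s := fun s hs =>
    (hγ.contDiffAt (hV.mem_nhds hs)).differentiableAt one_ne_zero
  have hfd : ∀ x ∈ U, DifferentiableAt ℝ f x := fun x hx =>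
    (hf.contDiffAt (hU.mem_nhds hx)).differentiableAt one_ne_zero
  have h1d : ∀ x ∈ U, DifferentiableAt ℝ δf₁ x := fun x hx =>
    (h1.contDiffAt (hU.mem_nhds hx)).differentiableAt one_ne_zero
  have h2d : ∀ x ∈ U, DifferentiableAt ℝ δf₂ x := fun x hx =>
    (h2.contDiffAt (hU.mem_nhds hx)).differentiableAt one_ne_zero
  have hUeq : γ '' V = U := hbij.image_eq
  have hcov : ∫ x in U, elasticIntegrand f δf₁ δf₂ a lam c x
      = ∫ s in V, |(fderiv ℝ γ s).det| • elasticIntegrand f δf₁ δf₂ a lam c (γ s) := by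
    rw [← hUeq]
    exact integral_image_eq_integral_abs_det_fderiv_smul volume hV.measurableSet
      (fun s hs => ((hγd s hs).hasFDerivAt).hasFDerivWithinAt) hbij.injOn _
  rw [hcov]
  apply setIntegral_congr_fun hV.measurableSet
  intro s hs
  have hx : γ s ∈ U := hbij.mapsTo hs
  have := elastic_comp γ f δf₁ δf₂ a lam c s (hγd s hs) (hfd _ hx) (h1d _ hx) (h2d _ hx)
    (hdet s hs) (hg _ hx)
  simp only [this, smul_eq_mul, ← Jmat_det_eq, abs_of_pos (hdet s hs)]
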